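/- Let u_1, …, u_n ∈ ℝ^p. Then the matrix Ω̆ = ( (1/n) Σ_{i=1}^n (u_i u_iᵀ)^{1/2} )² = ( (1/n) Σ_{i : u_i ≠ 0} u_i u_iᵀ / ‖u_i‖ )² is symmetric positive semidefinite and is the unique minimizer, over p×p symmetric positive semidefinite matrices Ω, of the functional Ω ↦ (1/n) Σ_{i=1}^n d_S²(Ω, u_i u_iᵀ). -/

import Mathlib

open Matrix MeasureTheory ProbabilityTheory

noncomputable def eunorm {p : ℕ} (x : Fin p → ℝ) : ℝ := Real.sqrt (∑ i, x i ^ 2)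

noncomputable def frob {p : ℕ} (M : Matrix (Fin p) (Fin p) ℝ) : ℝ :=
  Real.sqrt (∑ i, ∑ j, M i j ^ 2)

open Classical in
noncomputable def msqrt {p : ℕ} (A : Matrix (Fin p) (Fin p) ℝ) : Matrix (Fin p) (Fin p) ℝ :=
  if h : A.PosSemidef then
    (h.1.eigenvectorUnitary : Matrix (Fin p) (Fin p) ℝ) * diagonal ((↑) ∘ (√·) ∘ h.1.eigenvalues) *
      (star h.1.eigenvectorUnitary : Matrix (Fin p) (Fin p) ℝ) else 0

noncomputable def dS {p : ℕ} (A B : Matrix (Fin p) (Fin p) ℝ) : ℝ := frob (msqrt A - msqrt B)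

noncomputable def mExp {p : ℕ} {Ωs : Type*} [MeasurableSpace Ωs] (μ : Measure Ωs)
    (F : Ωs → Matrix (Fin p) (Fin p) ℝ) : Matrix (Fin p) (Fin p) ℝ :=
  Matrix.of fun i j => ∫ ω, F ω i j ∂μ

noncomputable def covDS {p : ℕ} {Ωs : Type*} [MeasurableSpace Ωs] (μ : Measure Ωs)
    (Y : Ωs → Fin p → ℝ) : Matrix (Fin p) (Fin p) ℝ :=
  (mExp μ fun ω => msqrt (vecMulVec (Y ω - fun r => ∫ ω', Y ω' r ∂μ) (Y ω - fun r => ∫ ω', Y ω' r ∂μ))) *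
  (mExp μ fun ω => msqrt (vecMulVec (Y ω - fun r => ∫ ω', Y ω' r ∂μ) (Y ω - fun r => ∫ ω', Y ω' r ∂μ)))

section aux
variable {p : ℕ}

open scoped MatrixOrder in
lemma msqrt_of_psd {A : Matrix (Fin p) (Fin p) ℝ} (hA : A.PosSemidef) : msqrt A = CFC.sqrt A := by
  rw [msqrt, dif_pos hA, CFC.sqrt_eq_real_sqrt A hA.nonneg, cfcₙ_eq_cfc, hA.1.cfc_eq,
    IsHermitian.cfc, Unitary.conjStarAlgAut_apply]
  rfl

lemma psd_smul {A : Matrix (Fin p) (Fin p) ℝ} (hA : A.PosSemidef) {c : ℝ} (hc : 0 ≤ c) :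
    (c • A).PosSemidef := by
  refine ⟨?_, fun x => ?_⟩
  · unfold Matrix.IsHermitian
    rw [conjTranspose_smul, hA.1]
    simp
  · exact (hA.smul hc).2 x

lemma psd_vecMulVec (u : Fin p → ℝ) : (vecMulVec u u).PosSemidef := by
  rw [vecMulVec_eq (Fin 1)]
  have := Matrix.posSemidef_conjTranspose_mul_self (Matrix.replicateRow (Fin 1) u)
  rwa [conjTranspose_replicateRow, star_trivial] at this

open scoped MatrixOrder in
lemma msqrt_psd {A : Matrix (Fin p) (Fin p) ℝ} (hA : A.PosSemidef) : (msqrt A).PosSemidef := by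
  rw [msqrt_of_psd hA]; exact (CFC.sqrt_nonneg A).posSemidef

open scoped MatrixOrder in
lemma msqrt_mul_self {A : Matrix (Fin p) (Fin p) ℝ} (hA : A.PosSemidef) :
    msqrt A * msqrt A = A := by
  rw [msqrt_of_psd hA]; exact CFC.sqrt_mul_sqrt_self A hA.nonneg

open scoped MatrixOrder in
lemma msqrt_eq {A B : Matrix (Fin p) (Fin p) ℝ} (hA : A.PosSemidef) (hB : B.PosSemidef)
    (h : B * B = A) : msqrt A = B := by
  rw [msqrt_of_psd hA]
  exact CFC.sqrt_unique h hB.nonneg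

lemma vecMulVec_mul_vecMulVec (u : Fin p → ℝ) :
    vecMulVec u u * vecMulVec u u = (∑ i, u i ^ 2) • vecMulVec u u := by
  ext i j
  simp [vecMulVec_apply, Matrix.mul_apply, Finset.sum_mul, Finset.mul_sum, sq]
  ring_nf
  apply Finset.sum_congr rfl
  intro k _
  ring

lemma msqrt_vecMulVec (u : Fin p → ℝ) :
    msqrt (vecMulVec u u) =
      if u = 0 then 0 else (eunorm u)⁻¹ • vecMulVec u u := by
  by_cases hu : u = 0
  · simp only [hu, if_pos]
    have h0 : (vecMulVec (0 : Fin p → ℝ) (0 : Fin p → ℝ)) = (0 : Matrix (Fin p) (Fin p) ℝ) := by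
      ext i j; simp [vecMulVec_apply]
    rw [h0]
    exact msqrt_eq Matrix.PosSemidef.zero Matrix.PosSemidef.zero (by simp)
  · rw [if_neg hu]
    have hsum : 0 < ∑ i, u i ^ 2 := by
      rcases Function.ne_iff.mp hu with ⟨i, hi⟩
      refine Finset.sum_pos' (fun j _ => sq_nonneg _) ⟨i, Finset.mem_univ i, ?_⟩
      have : u i ≠ 0 := by simpa using hi
      positivity
    have hnorm : eunorm u = Real.sqrt (∑ i, u i ^ 2) := rfl
    have hpos : 0 < eunorm u := by rw [hnorm]; positivity
    refine msqrt_eq (psd_vecMulVec u) (psd_smul (psd_vecMulVec u) (by positivity)) ?_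
    rw [smul_mul_assoc, Matrix.mul_smul, vecMulVec_mul_vecMulVec, smul_smul, smul_smul]
    have : (eunorm u)⁻¹ * (eunorm u)⁻¹ * (∑ i, u i ^ 2) = 1 := by
      rw [hnorm, ← Real.mul_self_sqrt hsum.le]
      have hs : (0:ℝ) < Real.sqrt (∑ i, u i ^ 2) := Real.sqrt_pos.mpr hsum
      field_simp
      rw [Real.sq_sqrt (sq_nonneg (√(∑ x, u x ^ 2)))]
    rw [this, one_smul]

end aux

section quad
variable {p : ℕ}

noncomputable def fip (A B : Matrix (Fin p) (Fin p) ℝ) : ℝ := ∑ j, ∑ k, A j k * B j k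

lemma frob_sq (A : Matrix (Fin p) (Fin p) ℝ) : frob A ^ 2 = fip A A := by
  rw [frob, Real.sq_sqrt (by positivity)]
  simp [fip, sq]

lemma fip_self_nonneg (A : Matrix (Fin p) (Fin p) ℝ) : 0 ≤ fip A A := by
  apply Finset.sum_nonneg
  intro j _
  apply Finset.sum_nonneg
  intro k _
  exact mul_self_nonneg _

lemma fip_self_eq_zero {A : Matrix (Fin p) (Fin p) ℝ} (h : fip A A = 0) : A = 0 := by
  ext j k
  have h1 := (Finset.sum_eq_zero_iff_of_nonneg (fun j _ => Finset.sum_nonneg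
    (fun k _ => mul_self_nonneg (A j k)))).mp h j (Finset.mem_univ j)
  have h2 := (Finset.sum_eq_zero_iff_of_nonneg
    (fun k _ => mul_self_nonneg (A j k))).mp h1 k (Finset.mem_univ k)
  simpa using mul_self_eq_zero.mp h2

lemma fip_expand (D E : Matrix (Fin p) (Fin p) ℝ) :
    fip (D + E) (D + E) = fip D D + 2 * fip D E + fip E E := by
  simp only [fip, Matrix.add_apply, Finset.mul_sum, ← Finset.sum_add_distrib]
  apply Finset.sum_congr rfl; intro j _
  apply Finset.sum_congr rfl; intro k _
  ring

lemma fip_sum_right {n : ℕ} (D : Matrix (Fin p) (Fin p) ℝ)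
    (E : Fin n → Matrix (Fin p) (Fin p) ℝ) :
    fip D (∑ i, E i) = ∑ i, fip D (E i) := by
  simp only [fip, Matrix.sum_apply, Finset.mul_sum]
  have step : ∀ j, ∑ k, ∑ i, D j k * E i j k = ∑ i, ∑ k, D j k * E i j k :=
    fun j => Finset.sum_comm
  rw [Finset.sum_congr rfl (fun j _ => step j)]
  exact Finset.sum_comm

lemma fip_zero_right (D : Matrix (Fin p) (Fin p) ℝ) : fip D 0 = 0 := by
  simp [fip]

lemma key_decomp {n : ℕ} (hn : 0 < n) (S : Fin n → Matrix (Fin p) (Fin p) ℝ)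
    (M : Matrix (Fin p) (Fin p) ℝ) :
    ∑ i, frob (M - S i) ^ 2 =
      (n : ℝ) * fip (M - (n : ℝ)⁻¹ • ∑ i, S i) (M - (n : ℝ)⁻¹ • ∑ i, S i) +
        ∑ i, frob ((n : ℝ)⁻¹ • (∑ i, S i) - S i) ^ 2 := by
  set Sbar : Matrix (Fin p) (Fin p) ℝ := (n : ℝ)⁻¹ • ∑ i, S i with hSbar
  have hsumE : ∑ i, (Sbar - S i) = 0 := by
    rw [Finset.sum_sub_distrib, Finset.sum_const, Finset.card_univ, Fintype.card_fin, hSbar,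
      ← Nat.cast_smul_eq_nsmul ℝ, smul_smul, mul_inv_cancel₀ (by exact_mod_cast hn.ne'), one_smul,
      sub_self]
  have expand : ∀ i, frob (M - S i) ^ 2 =
      fip (M - Sbar) (M - Sbar) + 2 * fip (M - Sbar) (Sbar - S i) +
        fip (Sbar - S i) (Sbar - S i) := by
    intro i
    rw [frob_sq]
    have : M - S i = (M - Sbar) + (Sbar - S i) := by abel
    rw [this, fip_expand]
  calc ∑ i, frob (M - S i) ^ 2
      = ∑ i, (fip (M - Sbar) (M - Sbar) + 2 * fip (M - Sbar) (Sbar - S i) +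
          fip (Sbar - S i) (Sbar - S i)) := Finset.sum_congr rfl (fun i _ => expand i)
    _ = (n : ℝ) * fip (M - Sbar) (M - Sbar) + ∑ i, frob (Sbar - S i) ^ 2 := by
        rw [Finset.sum_add_distrib, Finset.sum_add_distrib, Finset.sum_const, Finset.card_univ,
          Fintype.card_fin, ← Finset.mul_sum, ← fip_sum_right, hsumE, fip_zero_right]
        simp only [mul_zero, add_zero, nsmul_eq_mul]
        congr 1
        exact Finset.sum_congr rfl (fun i _ => (frob_sq _).symm)

end quad

lemma psd_sum {p n : ℕ} (S : Fin n → Matrix (Fin p) (Fin p) ℝ)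
    (h : ∀ i, (S i).PosSemidef) : (∑ i, S i).PosSemidef := by
  classical
  induction (Finset.univ : Finset (Fin n)) using Finset.induction_on with
  | empty => simpa using (Matrix.PosSemidef.zero : (0 : Matrix (Fin p) (Fin p) ℝ).PosSemidef)
  | insert a s hx ih =>
    rw [Finset.sum_insert hx]
    exact (h a).add ih

theorem stmt13' {p n : ℕ} (hn : 0 < n) (u : Fin n → Fin p → ℝ)
    (Ωbreve : Matrix (Fin p) (Fin p) ℝ)
    (hΩbreve : Ωbreve =
      ((n : ℝ)⁻¹ • ∑ i, msqrt (vecMulVec (u i) (u i))) *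
      ((n : ℝ)⁻¹ • ∑ i, msqrt (vecMulVec (u i) (u i)))) :
    Ωbreve =
      ((n : ℝ)⁻¹ • ∑ i, if u i = 0 then 0 else (eunorm (u i))⁻¹ • vecMulVec (u i) (u i)) *
      ((n : ℝ)⁻¹ • ∑ i, if u i = 0 then 0 else (eunorm (u i))⁻¹ • vecMulVec (u i) (u i)) ∧
    Ωbreve.PosSemidef ∧
    (∀ W : Matrix (Fin p) (Fin p) ℝ, W.PosSemidef →
      (n : ℝ)⁻¹ * ∑ i, dS Ωbreve (vecMulVec (u i) (u i)) ^ 2 ≤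
        (n : ℝ)⁻¹ * ∑ i, dS W (vecMulVec (u i) (u i)) ^ 2) ∧
    (∀ W : Matrix (Fin p) (Fin p) ℝ, W.PosSemidef →
      ((n : ℝ)⁻¹ * ∑ i, dS W (vecMulVec (u i) (u i)) ^ 2) ≤
        ((n : ℝ)⁻¹ * ∑ i, dS Ωbreve (vecMulVec (u i) (u i)) ^ 2) → W = Ωbreve) := by
  have hnR : (0 : ℝ) < n := by exact_mod_cast hn
  set S : Fin n → Matrix (Fin p) (Fin p) ℝ := fun i => msqrt (vecMulVec (u i) (u i)) with hS
  set Sbar : Matrix (Fin p) (Fin p) ℝ := (n : ℝ)⁻¹ • ∑ i, S i with hSbdef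
  have hSbar_psd : Sbar.PosSemidef :=
    psd_smul (psd_sum S (fun i => msqrt_psd (psd_vecMulVec (u i)))) (by positivity)
  have hΩeq : Ωbreve = Sbar * Sbar := hΩbreve
  have hΩpsd : Ωbreve.PosSemidef := by
    rw [hΩeq, ← pow_two]
    exact hSbar_psd.pow 2
  have hmsqrtΩ : msqrt Ωbreve = Sbar := msqrt_eq hΩpsd hSbar_psd hΩeq.symm
  -- objective value at Ωbreve
  have hobjΩ : ∑ i, dS Ωbreve (vecMulVec (u i) (u i)) ^ 2 =
      ∑ i, frob (Sbar - S i) ^ 2 := by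
    apply Finset.sum_congr rfl
    intro i _
    rw [dS, hmsqrtΩ]
  have hobjW : ∀ W : Matrix (Fin p) (Fin p) ℝ, W.PosSemidef →
      ∑ i, dS W (vecMulVec (u i) (u i)) ^ 2 =
        (n : ℝ) * fip (msqrt W - Sbar) (msqrt W - Sbar) + ∑ i, frob (Sbar - S i) ^ 2 := by
    intro W hW
    have : ∑ i, dS W (vecMulVec (u i) (u i)) ^ 2 = ∑ i, frob (msqrt W - S i) ^ 2 := rfl
    rw [this, key_decomp hn S (msqrt W)]
  refine ⟨?_, hΩpsd, ?_, ?_⟩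
  · rw [hΩeq, hSbdef]
    congr 2 <;> exact Finset.sum_congr rfl (fun i _ => msqrt_vecMulVec (u i))
  · intro W hW
    rw [hobjΩ, hobjW W hW]
    apply mul_le_mul_of_nonneg_left _ (by positivity)
    have := fip_self_nonneg (msqrt W - Sbar)
    nlinarith
  · intro W hW hle
    rw [hobjΩ, hobjW W hW] at hle
    have h1 : (n : ℝ) * fip (msqrt W - Sbar) (msqrt W - Sbar) ≤ 0 := by
      have := mul_le_mul_of_nonneg_left hle (le_of_lt hnR)
      nlinarith [inv_pos.mpr hnR]
    have h2 : fip (msqrt W - Sbar) (msqrt W - Sbar) = 0 := by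
      have := fip_self_nonneg (msqrt W - Sbar)
      nlinarith
    have h3 : msqrt W = Sbar := sub_eq_zero.mp (fip_self_eq_zero h2)
    rw [hΩeq, ← h3]
    exact (msqrt_mul_self hW).symm

/-- For `u₁,…,uₙ ∈ ℝ^p`, the matrix
`Ω̆ = ((1/n) Σᵢ (uᵢuᵢᵀ)^{1/2})² = ((1/n) Σ_{i : uᵢ ≠ 0} uᵢuᵢᵀ/‖uᵢ‖)²` is symmetric positive
semidefinite and is the unique minimizer over psd `Ω` of `Ω ↦ (1/n) Σᵢ d_S²(Ω, uᵢuᵢᵀ)`. -/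
theorem stmt13 {p n : ℕ} (hn : 0 < n) (u : Fin n → Fin p → ℝ)
    (Ωbreve : Matrix (Fin p) (Fin p) ℝ)
    (hΩbreve : Ωbreve =
      ((n : ℝ)⁻¹ • ∑ i, msqrt (vecMulVec (u i) (u i))) *
      ((n : ℝ)⁻¹ • ∑ i, msqrt (vecMulVec (u i) (u i)))) :
    Ωbreve =
      ((n : ℝ)⁻¹ • ∑ i, if u i = 0 then 0 else (eunorm (u i))⁻¹ • vecMulVec (u i) (u i)) *
      ((n : ℝ)⁻¹ • ∑ i, if u i = 0 then 0 else (eunorm (u i))⁻¹ • vecMulVec (u i) (u i)) ∧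
    Ωbreve.PosSemidef ∧
    (∀ W : Matrix (Fin p) (Fin p) ℝ, W.PosSemidef →
      (n : ℝ)⁻¹ * ∑ i, dS Ωbreve (vecMulVec (u i) (u i)) ^ 2 ≤
        (n : ℝ)⁻¹ * ∑ i, dS W (vecMulVec (u i) (u i)) ^ 2) ∧
    (∀ W : Matrix (Fin p) (Fin p) ℝ, W.PosSemidef →
      ((n : ℝ)⁻¹ * ∑ i, dS W (vecMulVec (u i) (u i)) ^ 2) ≤
        ((n : ℝ)⁻¹ * ∑ i, dS Ωbreve (vecMulVec (u i) (u i)) ^ 2) → W = Ωbreve) := by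
  exact stmt13' hn u Ωbreve hΩbreve
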